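/- For real p ≥ 1 and all x ∈ [0,1], ((1+x)^{p*} + (1−x)^{p*})^{1/p*} / (1+x^p)^{1/p} ≤ 2, where p* = p/(p−1) is the conjugate exponent (for p > 1). -/

import Mathlib

/-- For `p > 1`, with `p* = p/(p−1)` its conjugate exponent, and all `x ∈ [0,1]`,
`((1+x)^{p*} + (1−x)^{p*})^{1/p*} / (1+x^p)^{1/p} ≤ 2`. -/
theorem stmt15 (p : ℝ) (hp : 1 < p) (x : ℝ) (hx : x ∈ Set.Icc (0 : ℝ) 1) :
    ((1 + x) ^ (p / (p - 1)) + (1 - x) ^ (p / (p - 1))) ^ ((p - 1) / p)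
      / (1 + x ^ p) ^ (1 / p) ≤ 2 := by
  obtain ⟨hx0, hx1⟩ := hx
  have hp0 : (0:ℝ) < p := by linarith
  have hp1 : (0:ℝ) < p - 1 := by linarith
  set q : ℝ := p / (p - 1) with hqdef
  have hq1 : 1 ≤ q := by
    rw [hqdef, le_div_iff₀ hp1]; linarith
  have hq0 : 0 < q := lt_of_lt_of_le one_pos hq1
  have h1x : (0:ℝ) ≤ 1 + x := by linarith
  have h1x' : (0:ℝ) ≤ 1 - x := by linarith
  -- numerator bound: (1+x)^q + (1-x)^q ≤ 2^q
  have hsum : (1 + x) ^ q + (1 - x) ^ q ≤ (2:ℝ) ^ q := by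
    have h := NNReal.add_rpow_le_rpow_add (⟨1 + x, h1x⟩) (⟨1 - x, h1x'⟩) hq1
    have h' := NNReal.coe_le_coe.2 h
    push_cast [NNReal.coe_rpow] at h'
    convert h' using 2
    norm_num
    · rfl
    · rfl
    · show (2:ℝ) = (1 + x) + (1 - x); ring
  have hinvq : (p - 1) / p = 1 / q := by
    field_simp [hqdef]
    rw [hqdef]; field_simp [hp1.ne']
  have hnum : ((1 + x) ^ q + (1 - x) ^ q) ^ ((p - 1) / p) ≤ 2 := by
    rw [hinvq]
    calc ((1 + x) ^ q + (1 - x) ^ q) ^ (1 / q) ≤ ((2:ℝ) ^ q) ^ (1 / q) := by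
          apply Real.rpow_le_rpow (by positivity) hsum (by positivity)
      _ = 2 := by
          rw [← Real.rpow_mul (by norm_num), mul_one_div, div_self hq0.ne', Real.rpow_one]
  have hden : (1:ℝ) ≤ (1 + x ^ p) ^ (1 / p) := by
    have : (1:ℝ) ≤ 1 + x ^ p := by
      have : (0:ℝ) ≤ x ^ p := Real.rpow_nonneg hx0 p
      linarith
    calc (1:ℝ) = 1 ^ (1/p) := (Real.one_rpow _).symm
      _ ≤ (1 + x ^ p) ^ (1 / p) := Real.rpow_le_rpow zero_le_one this (by positivity)
  calc ((1 + x) ^ q + (1 - x) ^ q) ^ ((p - 1) / p) / (1 + x ^ p) ^ (1 / p)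
      ≤ ((1 + x) ^ q + (1 - x) ^ q) ^ ((p - 1) / p) / 1 := by
        apply div_le_div_of_nonneg_left ?_ one_pos hden
        · positivity
    _ = ((1 + x) ^ q + (1 - x) ^ q) ^ ((p - 1) / p) := div_one _
    _ ≤ 2 := hnum
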